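/- If the Yellowstone sequence contains only finitely many prime terms, then a contradiction follows; equivalently, infinitely many terms of the Yellowstone sequence are prime. -/

import Mathlib

/-- The Yellowstone sequence: a 1 = 1, a 2 = 2, a 3 = 3, and for n ≥ 4,
`a n` is the least positive integer not among `a 1, …, a (n-1)` which shares
a common factor with `a (n-2)` and is coprime to `a (n-1)`. -/
def IsYellowstone (a : ℕ → ℕ) : Prop :=
  a 1 = 1 ∧ a 2 = 2 ∧ a 3 = 3 ∧
  ∀ n, 4 ≤ n →
    IsLeast {k : ℕ | 0 < k ∧ (∀ m, 1 ≤ m → m < n → a m ≠ k) ∧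
      1 < Nat.gcd k (a (n - 2)) ∧ Nat.gcd k (a (n - 1)) = 1} (a n)

theorem yellowstone_infinitely_many_primes (a : ℕ → ℕ) (ha : IsYellowstone a) :
    {n : ℕ | 1 ≤ n ∧ (a n).Prime}.Infinite := by
  obtain ⟨ha1, ha2, ha3, hstep⟩ := ha
  -- massaged recurrence
  have step : ∀ m : ℕ, 2 ≤ m →
      IsLeast {k : ℕ | 0 < k ∧ (∀ j, 1 ≤ j → j < m + 2 → a j ≠ k) ∧
        1 < Nat.gcd k (a m) ∧ Nat.gcd k (a (m + 1)) = 1} (a (m + 2)) := by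
    intro m hm
    have h := hstep (m + 2) (by omega)
    rw [show m + 2 - 2 = m by omega, show m + 2 - 1 = m + 1 by omega] at h
    exact h
  have apos : ∀ n, 1 ≤ n → 0 < a n := by
    intro n hn
    by_cases h4 : 4 ≤ n
    · obtain ⟨m, rfl⟩ : ∃ m, n = m + 2 := ⟨n - 2, by omega⟩
      exact (step m (by omega)).1.1
    · interval_cases n <;> simp [ha1, ha2, ha3]
  have hg2 : ∀ m, 2 ≤ m → 1 < Nat.gcd (a (m + 2)) (a m) := fun m hm => (step m hm).1.2.2.1
  have hg1 : ∀ m, 2 ≤ m → Nat.gcd (a (m + 2)) (a (m + 1)) = 1 := fun m hm => (step m hm).1.2.2.2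
  have hg1' : ∀ m, 3 ≤ m → Nat.gcd (a (m + 1)) (a m) = 1 := by
    intro m hm
    obtain ⟨k, rfl⟩ : ∃ k, m = k + 1 := ⟨m - 1, by omega⟩
    have h := hg1 k (by omega)
    rwa [show k + 2 = k + 1 + 1 by omega] at h
  have hinj : ∀ i j, 1 ≤ i → i < j → a i ≠ a j := by
    intro i j hi hij
    by_cases h4 : 4 ≤ j
    · obtain ⟨m, rfl⟩ : ∃ m, j = m + 2 := ⟨j - 2, by omega⟩
      exact (step m (by omega)).1.2.1 i hi hij
    · have hj3 : j ≤ 3 := by omega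
      interval_cases j <;> interval_cases i <;> simp [ha1, ha2, ha3]
  -- any set of indices on which `a` is bounded is finite
  have bounded : ∀ (T : Set ℕ) (C : ℕ), (∀ n ∈ T, 1 ≤ n ∧ a n ≤ C) → T.Finite := by
    intro T C hb
    have himg : (a '' T).Finite := by
      refine (Set.finite_Iic C).subset ?_
      rintro _ ⟨n, hn, rfl⟩
      exact (hb n hn).2
    refine Set.Finite.of_finite_image himg ?_
    intro i hi j hj hij
    rcases lt_trichotomy i j with h | h | h
    · exact absurd hij (hinj i j (hb i hi).1 h)
    · exact h
    · exact absurd hij.symm (hinj j i (hb j hj).1 h)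
  by_contra hcon
  rw [Set.not_infinite] at hcon
  obtain ⟨BP, hBP⟩ := (hcon.image a).bddAbove
  obtain ⟨MS, hMS⟩ := hcon.bddAbove
  have hnotprime : ∀ n, MS + 1 ≤ n → ¬ (a n).Prime := by
    intro n hn hp
    have hmem : n ∈ {n : ℕ | 1 ≤ n ∧ (a n).Prime} := ⟨by omega, hp⟩
    have := hMS hmem
    omega
  -- Step A: infinitely many even terms
  have hEv : {n : ℕ | 1 ≤ n ∧ 2 ∣ a n}.Infinite := by
    by_contra hEf
    rw [Set.not_infinite] at hEf
    obtain ⟨ME, hME⟩ := hEf.bddAbove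
    set V : Finset ℕ := hEf.toFinset.image a with hV
    set B1 : ℕ := V.sup id with hB1
    set K : ℕ := V.card + 1 with hK
    have hodd : ∀ n, ME + 1 ≤ n → ¬ 2 ∣ a n := by
      intro n hn h2
      have hmem : n ∈ {n : ℕ | 1 ≤ n ∧ 2 ∣ a n} := ⟨by omega, h2⟩
      have := hME hmem
      omega
    have hmemV : ∀ j x, 1 ≤ j → a j = x → 2 ∣ x → x ∈ V := by
      intro j x hj hx h2
      exact Finset.mem_image.mpr ⟨j, hEf.mem_toFinset.mpr ⟨hj, hx ▸ h2⟩, hx⟩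
    set M : ℕ := ME + MS + 5 with hM
    have key : ∀ m, M ≤ m → a (m + 2) ≤ 2 ^ K * B1 := by
      intro m hm
      have hgg := hg2 m (by omega)
      set p := (Nat.gcd (a (m + 2)) (a m)).minFac with hpdef
      have hpprime : p.Prime := Nat.minFac_prime (by omega)
      have hpd2 : p ∣ a (m + 2) := (Nat.minFac_dvd _).trans (Nat.gcd_dvd_left _ _)
      have hpd0 : p ∣ a m := (Nat.minFac_dvd _).trans (Nat.gcd_dvd_right _ _)
      have hpnd1 : ¬ p ∣ a (m + 1) := by
        intro hd
        have hdd : p ∣ Nat.gcd (a (m + 2)) (a (m + 1)) := Nat.dvd_gcd hpd2 hd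
        rw [hg1 m (by omega)] at hdd
        exact hpprime.one_lt.ne' (Nat.dvd_one.mp hdd)
      have hodd1 : ¬ 2 ∣ a (m + 1) := hodd (m + 1) (by omega)
      have cand : ∀ i, 1 ≤ i → (∀ j, 1 ≤ j → a j ≠ 2 ^ i * p) →
          a (m + 2) ≤ 2 ^ i * p := by
        intro i hi hnever
        refine (step m (by omega)).2 ⟨?_, ?_, ?_, ?_⟩
        · exact Nat.mul_pos (Nat.pow_pos (by norm_num)) hpprime.pos
        · exact fun j hj _ => hnever j hj
        · have hpg : p ∣ Nat.gcd (2 ^ i * p) (a m) :=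
            Nat.dvd_gcd (dvd_mul_left p _) hpd0
          have hpos : 0 < Nat.gcd (2 ^ i * p) (a m) :=
            Nat.gcd_pos_of_pos_left _ (Nat.mul_pos (Nat.pow_pos (by norm_num)) hpprime.pos)
          exact lt_of_lt_of_le hpprime.one_lt (Nat.le_of_dvd hpos hpg)
        · have c2 : Nat.Coprime 2 (a (m + 1)) :=
            (Nat.Prime.coprime_iff_not_dvd Nat.prime_two).mpr hodd1
          have cp : Nat.Coprime p (a (m + 1)) :=
            (hpprime.coprime_iff_not_dvd).mpr hpnd1
          exact Nat.Coprime.mul (Nat.Coprime.pow_left i c2) cp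
      -- Round 1 : 2p is a term, hence p is bounded
      have h2p : ∃ j, 1 ≤ j ∧ a j = 2 * p := by
        by_contra hno
        push_neg at hno
        have hle := cand 1 le_rfl (by intro j hj; rw [pow_one]; exact hno j hj)
        rw [pow_one] at hle
        obtain ⟨t, ht⟩ := hpd2
        have hapos := apos (m + 2) (by omega)
        have hodd2 : ¬ 2 ∣ a (m + 2) := hodd (m + 2) (by omega)
        have hnp : ¬ (a (m + 2)).Prime := hnotprime (m + 2) (by omega)
        have ht2 : t ≤ 2 := by
          refine Nat.le_of_mul_le_mul_left ?_ hpprime.pos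
          calc p * t = a (m + 2) := ht.symm
            _ ≤ 2 * p := hle
            _ = p * 2 := by ring
        interval_cases t
        · omega
        · rw [mul_one] at ht
          exact hnp (ht ▸ hpprime)
        · exact hodd2 ⟨p, by omega⟩
      obtain ⟨j0, hj0, haj0⟩ := h2p
      have hpB : 2 * p ≤ B1 := by
        have := hmemV j0 (2 * p) hj0 haj0 ⟨p, rfl⟩
        exact Finset.le_sup (f := id) this
      -- Round 2 : some 2^i * p with i ≤ K is never a term
      have hexists : ∃ i, 1 ≤ i ∧ i ≤ K ∧ ∀ j, 1 ≤ j → a j ≠ 2 ^ i * p := by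
        by_contra hno
        push_neg at hno
        have hsub : ∀ i ∈ Finset.Icc 1 K, 2 ^ i * p ∈ V := by
          intro i hi
          rw [Finset.mem_Icc] at hi
          obtain ⟨j, hj, hja⟩ := hno i hi.1 hi.2
          refine hmemV j _ hj hja ?_
          exact Dvd.dvd.mul_right (dvd_pow_self 2 (by omega)) p
        have hinjpow : Set.InjOn (fun i => 2 ^ i * p) (Finset.Icc 1 K) := by
          intro x _ y _ hxy
          have h1 : (2 : ℕ) ^ x = 2 ^ y :=
            Nat.eq_of_mul_eq_mul_right hpprime.pos hxy
          exact Nat.pow_right_injective (le_refl 2) h1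
        have hcard := Finset.card_le_card_of_injOn _ hsub hinjpow
        rw [Nat.card_Icc] at hcard
        omega
      obtain ⟨i, hi1, hiK, hnever⟩ := hexists
      calc a (m + 2) ≤ 2 ^ i * p := cand i hi1 hnever
        _ ≤ 2 ^ K * B1 := by
            have h1 : (2 : ℕ) ^ i ≤ 2 ^ K := Nat.pow_le_pow_right (by norm_num) hiK
            have h2 : p ≤ B1 := by omega
            exact Nat.mul_le_mul h1 h2
    have hfin : (Set.Ici (M + 2)).Finite := by
      refine bounded _ (2 ^ K * B1) ?_
      intro n hn
      have hn' : M + 2 ≤ n := hn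
      obtain ⟨m, rfl⟩ : ∃ m, n = m + 2 := ⟨n - 2, by omega⟩
      exact ⟨by omega, key m (by omega)⟩
    exact (Set.Ici_infinite (M + 2)) hfin
  -- Step B : a prime q that is never a term
  obtain ⟨q, hqB, hqprime⟩ := Nat.exists_infinite_primes (BP + 1)
  have hqnever : ∀ j, 1 ≤ j → a j ≠ q := by
    intro j hj hja
    have hmem : a j ∈ a '' {n : ℕ | 1 ≤ n ∧ (a n).Prime} :=
      ⟨j, ⟨hj, hja ▸ hqprime⟩, rfl⟩
    have := hBP hmem
    omega
  -- Step C : q divides infinitely many terms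
  have hTq : {m : ℕ | 1 ≤ m ∧ q ∣ a m}.Infinite := by
    by_contra hTf
    rw [Set.not_infinite] at hTf
    obtain ⟨MT, hMT⟩ := hTf.bddAbove
    set W : Finset ℕ := hTf.toFinset.image a with hW
    have hmemW : ∀ j x, 1 ≤ j → a j = x → q ∣ x → x ∈ W := by
      intro j x hj hx hq
      exact Finset.mem_image.mpr ⟨j, hTf.mem_toFinset.mpr ⟨hj, hx ▸ hq⟩, hx⟩
    have hexists : ∃ i, 1 ≤ i ∧ i ≤ W.card + 1 ∧ ∀ j, 1 ≤ j → a j ≠ 2 ^ i * q := by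
      by_contra hno
      push_neg at hno
      have hsub : ∀ i ∈ Finset.Icc 1 (W.card + 1), 2 ^ i * q ∈ W := by
        intro i hi
        rw [Finset.mem_Icc] at hi
        obtain ⟨j, hj, hja⟩ := hno i hi.1 hi.2
        exact hmemW j _ hj hja (dvd_mul_left q _)
      have hinjpow : Set.InjOn (fun i => 2 ^ i * q) (Finset.Icc 1 (W.card + 1)) := by
        intro x _ y _ hxy
        have h1 : (2 : ℕ) ^ x = 2 ^ y :=
          Nat.eq_of_mul_eq_mul_right hqprime.pos hxy
        exact Nat.pow_right_injective (le_refl 2) h1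
      have hcard := Finset.card_le_card_of_injOn _ hsub hinjpow
      rw [Nat.card_Icc] at hcard
      omega
    obtain ⟨i, hi1, hiK, hnever⟩ := hexists
    have key : ∀ m, m ∈ {n : ℕ | 1 ≤ n ∧ 2 ∣ a n} → MT + 3 ≤ m → a (m + 2) ≤ 2 ^ i * q := by
      intro m hme hm
      have h2am : 2 ∣ a m := hme.2
      have hqnd : ¬ q ∣ a (m + 1) := by
        intro hd
        have hmem : m + 1 ∈ {n : ℕ | 1 ≤ n ∧ q ∣ a n} := ⟨by omega, hd⟩
        have := hMT hmem
        omega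
      have hodd1 : ¬ 2 ∣ a (m + 1) := by
        intro h2
        have hdd : (2 : ℕ) ∣ Nat.gcd (a (m + 1)) (a m) := Nat.dvd_gcd h2 h2am
        rw [hg1' m (by omega)] at hdd
        omega
      refine (step m (by omega)).2 ⟨?_, ?_, ?_, ?_⟩
      · exact Nat.mul_pos (Nat.pow_pos (by norm_num)) hqprime.pos
      · exact fun j hj _ => hnever j hj
      · have h2c : (2 : ℕ) ∣ 2 ^ i * q :=
          Dvd.dvd.mul_right (dvd_pow_self 2 (by omega)) q
        have hpg : (2 : ℕ) ∣ Nat.gcd (2 ^ i * q) (a m) := Nat.dvd_gcd h2c h2am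
        have hpos : 0 < Nat.gcd (2 ^ i * q) (a m) :=
          Nat.gcd_pos_of_pos_left _ (Nat.mul_pos (Nat.pow_pos (by norm_num)) hqprime.pos)
        exact lt_of_lt_of_le (by norm_num) (Nat.le_of_dvd hpos hpg)
      · have c2 : Nat.Coprime 2 (a (m + 1)) :=
          (Nat.Prime.coprime_iff_not_dvd Nat.prime_two).mpr hodd1
        have cq : Nat.Coprime q (a (m + 1)) :=
          (hqprime.coprime_iff_not_dvd).mpr hqnd
        exact Nat.Coprime.mul (Nat.Coprime.pow_left i c2) cq
    have hT2 : ({n : ℕ | 1 ≤ n ∧ 2 ∣ a n} \ Set.Iio (MT + 3)).Infinite :=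
      hEv.diff (Set.finite_Iio _)
    have hT3 : ((fun m => m + 2) '' ({n : ℕ | 1 ≤ n ∧ 2 ∣ a n} \ Set.Iio (MT + 3))).Infinite :=
      hT2.image (fun x _ y _ h => by omega)
    refine hT3 (bounded _ (2 ^ i * q) ?_)
    rintro n ⟨m, ⟨hme, hmi⟩, rfl⟩
    have hmi' : MT + 3 ≤ m := by simpa using hmi
    exact show 1 ≤ m + 2 ∧ a (m + 2) ≤ 2 ^ i * q from ⟨by omega, key m hme hmi'⟩
  -- Step D : final contradiction
  have key : ∀ m, m ∈ {n : ℕ | 1 ≤ n ∧ q ∣ a n} → 3 ≤ m → a (m + 2) ≤ q := by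
    intro m hme hm
    have hqd : q ∣ a m := hme.2
    have hqnd1 : ¬ q ∣ a (m + 1) := by
      intro hd
      have hdd : q ∣ Nat.gcd (a (m + 1)) (a m) := Nat.dvd_gcd hd hqd
      rw [hg1' m hm] at hdd
      exact hqprime.one_lt.ne' (Nat.dvd_one.mp hdd)
    refine (step m (by omega)).2 ⟨?_, ?_, ?_, ?_⟩
    · exact hqprime.pos
    · exact fun j hj _ => hqnever j hj
    · have hpg : q ∣ Nat.gcd q (a m) := Nat.dvd_gcd dvd_rfl hqd
      have hpos : 0 < Nat.gcd q (a m) := Nat.gcd_pos_of_pos_left _ hqprime.pos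
      exact lt_of_lt_of_le hqprime.one_lt (Nat.le_of_dvd hpos hpg)
    · exact (hqprime.coprime_iff_not_dvd).mpr hqnd1
  have hT2 : ({n : ℕ | 1 ≤ n ∧ q ∣ a n} \ Set.Iio 3).Infinite :=
    hTq.diff (Set.finite_Iio _)
  have hT3 : ((fun m => m + 2) '' ({n : ℕ | 1 ≤ n ∧ q ∣ a n} \ Set.Iio 3)).Infinite :=
    hT2.image (fun x _ y _ h => by omega)
  refine hT3 (bounded _ q ?_)
  rintro n ⟨m, ⟨hme, hmi⟩, rfl⟩
  have hmi' : 3 ≤ m := by simpa using hmi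
  exact show 1 ≤ m + 2 ∧ a (m + 2) ≤ q from ⟨by omega, key m hme hmi'⟩
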